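/- Let F ∈ K[x,y,z] be homogeneous and let ℓ_1, ..., ℓ_n be pairwise non-proportional linear forms with A = ℓ_1⋯ℓ_n. For j ≥ 1, if A^j divides every partial derivative of order r - j of F (for some r ≥ j + 1), then A^{j+1} divides every partial derivative of order r - j - 1 of F. -/

import Mathlib

open MvPolynomial Finsupp
set_option linter.unusedSectionVars false
set_option maxHeartbeats 1000000

namespace Stmt6Aux

section CommRingPart
variable {σ : Type*} [Fintype σ] [DecidableEq σ] {R : Type*} [CommRing R]


lemma sum_X_mul_pderiv_monomial (v : σ →₀ ℕ) (a : R) :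
    ∑ i : σ, X i * pderiv i (monomial v a) =
      ((v.degree : MvPolynomial σ R)) * monomial v a := by
  have h1 : ∀ i : σ, X i * pderiv i (monomial v a) = monomial v (a * v i) := by
    intro i
    rw [pderiv_monomial, X, monomial_mul, one_mul]
    rcases Nat.eq_zero_or_pos (v i) with h | h
    · simp [h]
    · congr 1
      rw [add_tsub_cancel_of_le]
      exact Finsupp.single_le_iff.mpr h
  simp only [h1]
  rw [← map_sum (monomial v)]
  have : ∑ i : σ, a * (v i : R) = a * (v.degree : R) := by
    rw [← Finset.mul_sum]
    congr 1
    rw [Finsupp.degree_apply, Nat.cast_sum]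
    exact (Finset.sum_subset (Finset.subset_univ _) (by
      intro x _ hx
      simp [Finsupp.notMem_support_iff.mp hx])).symm
  rw [this]
  have : (v.degree : MvPolynomial σ R) = C (v.degree : R) := by
    simp
  rw [this, C_mul_monomial, mul_comm]

lemma euler {F : MvPolynomial σ R} {d : ℕ} (hF : F.IsHomogeneous d) :
    ∑ i : σ, X i * pderiv i F = (d : MvPolynomial σ R) * F := by
  conv_lhs => rw [F.as_sum]
  conv_rhs => rw [F.as_sum]
  simp only [map_sum, Finset.mul_sum]
  rw [Finset.sum_comm]
  refine Finset.sum_congr rfl fun v hv => ?_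
  rw [sum_X_mul_pderiv_monomial]
  have : v.degree = d := by
    by_contra h
    exact MvPolynomial.mem_support_iff.mp hv (hF.coeff_eq_zero h)
  rw [this]



lemma pderiv_isHomogeneous {F : MvPolynomial σ R} {d : ℕ} (hF : F.IsHomogeneous d) (i : σ) :
    (pderiv i F).IsHomogeneous (d - 1) := by
  conv_lhs => rw [F.as_sum]
  rw [map_sum]
  apply IsHomogeneous.sum
  intro v hv
  rw [pderiv_monomial]
  rcases Nat.eq_zero_or_pos (v i) with h | h
  · simp only [h, Nat.cast_zero, mul_zero]
    rw [monomial_zero]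
    exact isHomogeneous_zero _ _ _
  · apply isHomogeneous_monomial
    have hvd : v.degree = d := by
      by_contra h
      exact MvPolynomial.mem_support_iff.mp hv (hF.coeff_eq_zero h)
    have hle : Finsupp.single i 1 ≤ v := Finsupp.single_le_iff.mpr h
    have hv2 : Finsupp.single i 1 + (v - Finsupp.single i 1) = v := add_tsub_cancel_of_le hle
    have := congrArg Finsupp.degree hv2
    rw [Finsupp.degree_eq_weight_one] at this ⊢
    rw [map_add] at this
    have hsingle : (Finsupp.weight (fun _ : σ => (1 : ℕ))) (Finsupp.single i 1) = 1 := by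
      rw [← Finsupp.degree_eq_weight_one]; simp [Finsupp.degree_apply, Finsupp.support_single_ne_zero]
    rw [hsingle] at this
    rw [← Finsupp.degree_eq_weight_one] at this ⊢
    omega

lemma foldr_isHomogeneous {F : MvPolynomial σ R} {d : ℕ} (hF : F.IsHomogeneous d)
    (L : List σ) :
    (L.foldr (fun v p => MvPolynomial.pderiv v p) F).IsHomogeneous (d - L.length) := by
  induction L with
  | nil => simpa using hF
  | cons v L ih =>
      have := pderiv_isHomogeneous ih v
      simpa [List.foldr_cons, Nat.sub_sub] using this


end CommRingPart

section FieldPart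
variable {σ : Type*} [Fintype σ] [DecidableEq σ] {K : Type*} [Field K]


lemma eq_single_of_degree_one {m : σ →₀ ℕ} (h : m.degree = 1) :
    ∃ i, m = Finsupp.single i 1 := by
  have hne : m ≠ 0 := by
    intro h0; rw [h0, map_zero] at h; omega
  obtain ⟨i, hi⟩ := Finsupp.support_nonempty_iff.mpr hne
  refine ⟨i, ?_⟩
  have hmi : 1 ≤ m i := Nat.one_le_iff_ne_zero.mpr (Finsupp.mem_support_iff.mp hi)
  ext j
  rcases eq_or_ne j i with rfl | hj
  · have : m j ≤ m.degree := Finsupp.le_degree j m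
    simp only [Finsupp.single_eq_same]
    omega
  · simp only [Finsupp.single_eq_of_ne' (Ne.symm hj)]
    by_contra hmj
    have hj' : j ∈ m.support := Finsupp.mem_support_iff.mpr hmj
    have hsub : ({i, j} : Finset σ) ⊆ m.support := by
      intro x hx
      simp only [Finset.mem_insert, Finset.mem_singleton] at hx
      rcases hx with rfl | rfl <;> assumption
    have : m i + m j ≤ m.degree := by
      rw [Finsupp.degree_apply]
      calc m i + m j = ∑ x ∈ ({i, j} : Finset σ), m x := by
            rw [Finset.sum_insert (by simpa using hj.symm), Finset.sum_singleton]
        _ ≤ _ := Finset.sum_le_sum_of_subset hsub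
    omega

lemma linear_repr {ℓ : MvPolynomial σ K} (h : ℓ.IsHomogeneous 1) :
    ℓ = ∑ i : σ, C (coeff (Finsupp.single i 1) ℓ) * X i := by
  ext m
  rw [coeff_sum]
  simp only [coeff_C_mul, coeff_X']
  rcases em (∃ i, m = Finsupp.single i 1) with ⟨i, rfl⟩ | hm
  · rw [Finset.sum_eq_single i]
    · simp
    · intro b _ hb
      rw [if_neg, mul_zero]
      intro hbe
      have := congrArg (fun f => f b) hbe
      simp [Finsupp.single_eq_of_ne' (Ne.symm hb)] at this
    · simp
  · rw [Finset.sum_eq_zero, MvPolynomial.IsHomogeneous.coeff_eq_zero h]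
    · intro hdeg
      obtain ⟨i, hi⟩ := eq_single_of_degree_one hdeg
      exact hm ⟨i, hi⟩
    · intro b _
      rw [if_neg (fun hbe => hm ⟨b, hbe.symm⟩), mul_zero]




lemma pderiv_linear {ℓ : MvPolynomial σ K} (h : ℓ.IsHomogeneous 1) (v : σ) :
    pderiv v ℓ = C (coeff (Finsupp.single v 1) ℓ) := by
  conv_lhs => rw [linear_repr h]
  rw [map_sum]
  rw [Finset.sum_eq_single v]
  · rw [pderiv_C_mul, pderiv_X_self, mul_one]
  · intro b _ hb
    rw [pderiv_C_mul, pderiv_X_of_ne hb, mul_zero]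
  · simp

lemma exists_coeff_ne_zero {ℓ : MvPolynomial σ K} (h : ℓ.IsHomogeneous 1) (h0 : ℓ ≠ 0) :
    ∃ i, coeff (Finsupp.single i 1) ℓ ≠ 0 := by
  by_contra hc
  push_neg at hc
  apply h0
  rw [linear_repr h]
  simp [hc]

lemma prime_X_fin3 (i : Fin 3) : Prime (X i : MvPolynomial (Fin 3) K) := by
  have e1 := renameEquiv K (Equiv.swap i 0)
  rw [← MulEquiv.prime_iff (renameEquiv K (Equiv.swap i 0)).toMulEquiv]
  have h1 : (renameEquiv K (Equiv.swap i 0)).toMulEquiv (X i) = (X 0 : MvPolynomial (Fin 3) K) := by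
    simp [renameEquiv, rename_X]
  rw [h1, ← MulEquiv.prime_iff (finSuccEquiv K 2).toMulEquiv]
  have h2 : (finSuccEquiv K 2).toMulEquiv (X 0) = Polynomial.X := by
    simpa using finSuccEquiv_X_zero (R := K) (n := 2)
  rw [h2]
  exact Polynomial.prime_X






lemma prime_linear {ℓ : MvPolynomial (Fin 3) K} (h : ℓ.IsHomogeneous 1) (h0 : ℓ ≠ 0) :
    Prime ℓ := by
  obtain ⟨i, hi⟩ := exists_coeff_ne_zero h h0
  set c : Fin 3 → K := fun j => coeff (Finsupp.single j 1) ℓ with hc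
  have hrep : ℓ = ∑ j : Fin 3, C (c j) * X j := linear_repr h
  set ψ : MvPolynomial (Fin 3) K →ₐ[K] MvPolynomial (Fin 3) K :=
    aeval (fun j => if j = i then ℓ else X j) with hψ
  set φ : MvPolynomial (Fin 3) K →ₐ[K] MvPolynomial (Fin 3) K :=
    aeval (fun j => if j = i then
      C (c i)⁻¹ * (X i - (ℓ - C (c i) * X i)) else X j) with hφ
  have hCmap : ∀ (θ : MvPolynomial (Fin 3) K →ₐ[K] MvPolynomial (Fin 3) K) (a : K),
      θ (C a) = C a := by
    intro θ a
    have := θ.commutes a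
    rwa [MvPolynomial.algebraMap_eq] at this
  have hsum_erase : ∑ j ∈ Finset.univ.erase i, C (c j) * X j = ℓ - C (c i) * X i := by
    have h2 := Finset.sum_erase_add Finset.univ (fun j => C (c j) * X j) (Finset.mem_univ i)
    rw [← hrep] at h2
    linear_combination h2
  have key : ∀ θ : MvPolynomial (Fin 3) K →ₐ[K] MvPolynomial (Fin 3) K,
      (∀ j, j ≠ i → θ (X j) = X j) →
      θ ℓ = (ℓ - C (c i) * X i) + C (c i) * θ (X i) := by
    intro θ hθ
    conv_lhs => rw [hrep]
    rw [map_sum]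
    have heach : ∀ j, θ (C (c j) * X j) = C (c j) * θ (X j) := fun j => by
      rw [map_mul, hCmap]
    simp_rw [heach]
    rw [← Finset.sum_erase_add _ _ (Finset.mem_univ i)]
    congr 1
    rw [← hsum_erase]
    exact Finset.sum_congr rfl fun j hj => by rw [hθ j (Finset.ne_of_mem_erase hj)]
  have hψX : ψ (X i) = ℓ := by simp [hψ]
  have hφX : φ (X i) = C (c i)⁻¹ * (X i - (ℓ - C (c i) * X i)) := by simp [hφ]
  have hψX' : ∀ j, j ≠ i → ψ (X j) = X j := fun j hj => by simp [hψ, hj]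
  have hφX' : ∀ j, j ≠ i → φ (X j) = X j := fun j hj => by simp [hφ, hj]
  have hCinv : C (c i) * C ((c i)⁻¹) = (1 : MvPolynomial (Fin 3) K) := by
    rw [← C_mul, mul_inv_cancel₀ hi, C_1]
  have h1 : φ.comp ψ = AlgHom.id K (MvPolynomial (Fin 3) K) := by
    apply MvPolynomial.algHom_ext
    intro j
    rcases eq_or_ne j i with rfl | hj
    · rw [AlgHom.comp_apply, hψX, AlgHom.id_apply, key φ hφX', hφX]
      linear_combination (X j - (ℓ - C (c j) * X j)) * hCinv
    · rw [AlgHom.comp_apply, hψX' j hj, hφX' j hj, AlgHom.id_apply]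
  have h2 : ψ.comp φ = AlgHom.id K (MvPolynomial (Fin 3) K) := by
    apply MvPolynomial.algHom_ext
    intro j
    rcases eq_or_ne j i with rfl | hj
    · rw [AlgHom.comp_apply, hφX, AlgHom.id_apply, map_mul, hCmap, map_sub, map_sub, map_mul,
        hCmap, hψX, key ψ hψX', hψX]
      linear_combination (X j) * hCinv
    · rw [AlgHom.comp_apply, hφX' j hj, hψX' j hj, AlgHom.id_apply]
  let e : MvPolynomial (Fin 3) K ≃ₐ[K] MvPolynomial (Fin 3) K := AlgEquiv.ofAlgHom ψ φ h2 h1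
  have heX : e (X i) = ℓ := hψX
  have := (MulEquiv.prime_iff e.toMulEquiv (p := X i)).mpr (prime_X_fin3 i)
  rwa [show e.toMulEquiv (X i) = ℓ from heX] at this



lemma smul_of_dvd_linear {p q : MvPolynomial σ K} (hp : p.IsHomogeneous 1)
    (hq : q.IsHomogeneous 1) (hdvd : p ∣ q) : ∃ a : K, q = a • p := by
  obtain ⟨g, hg⟩ := hdvd
  refine ⟨coeff 0 g, ?_⟩
  have hq1 : q = homogeneousComponent 1 q :=
    (homogeneousComponent_of_mem ((mem_homogeneousSubmodule 1 q).mpr hq) ▸ (if_pos rfl).symm)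
  have hgdec := sum_homogeneousComponent g
  have : q = ∑ k ∈ Finset.range (g.totalDegree + 1), p * homogeneousComponent k g := by
    rw [← Finset.mul_sum, hgdec, hg]
  rw [hq1, this, map_sum]
  have heach : ∀ k ∈ Finset.range (g.totalDegree + 1),
      homogeneousComponent 1 (p * homogeneousComponent k g) =
        if k = 0 then p * homogeneousComponent 0 g else 0 := by
    intro k _
    have hmem : p * homogeneousComponent k g ∈ homogeneousSubmodule (σ := σ) (R := K) (1 + k) :=
      (mem_homogeneousSubmodule _ _).mpr (hp.mul (homogeneousComponent_isHomogeneous k g))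
    rw [homogeneousComponent_of_mem hmem]
    rcases eq_or_ne k 0 with rfl | hk
    · simp
    · rw [if_neg (by omega), if_neg hk]
  rw [Finset.sum_congr rfl heach, Finset.sum_ite_eq' _ 0 (fun _ => p * homogeneousComponent 0 g)]
  rw [if_pos (by simp), homogeneousComponent_zero, smul_eq_C_mul, mul_comm]

lemma prod_primes_dvd' {α : Type*} [CommMonoidWithZero α] [IsCancelMulZero α] {ι : Type*}
    (s : Finset ι) (f : ι → α) (G : α) (hp : ∀ i ∈ s, Prime (f i))
    (hnd : ∀ i ∈ s, ∀ j ∈ s, i ≠ j → ¬ f i ∣ f j) (h : ∀ i ∈ s, f i ∣ G) :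
    ∏ i ∈ s, f i ∣ G := by
  classical
  induction s using Finset.induction_on generalizing G with
  | empty => simpa using one_dvd G
  | @insert a s ha ih =>
      obtain ⟨G₁, hG₁⟩ := h a (Finset.mem_insert_self a s)
      rw [Finset.prod_insert ha, hG₁]
      refine mul_dvd_mul_left _ (ih G₁ (fun i hi => hp i (Finset.mem_insert_of_mem hi))
        (fun i hi j hj hij => hnd i (Finset.mem_insert_of_mem hi) j (Finset.mem_insert_of_mem hj) hij)
        (fun i hi => ?_))
      have hiG : f i ∣ f a * G₁ := hG₁ ▸ h i (Finset.mem_insert_of_mem hi)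
      rcases (hp i (Finset.mem_insert_of_mem hi)).2.2 _ _ hiG with hfa | hfi
      · exact absurd hfa (hnd i (Finset.mem_insert_of_mem hi) a (Finset.mem_insert_self a s)
          (fun hia => ha (hia ▸ hi)))
      · exact hfi


end FieldPart

end Stmt6Aux


/-- The Claim of Proposition 3.3: let `ℓ 1, ..., ℓ n` be pairwise non-proportional nonzero linear
forms in `K[x,y,z]`, `A = ℓ 1 ⋯ ℓ n`, and `F` homogeneous. If `A^j` divides every partial
derivative of order `r - j` of `F` (`1 ≤ j`, `j + 1 ≤ r`), then `A^(j+1)` divides every partial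
derivative of order `r - j - 1` of `F`. Order-`k` partial derivatives are encoded by folding
`pderiv` over lists of variables of length `k`. -/
theorem stmt6 {K : Type*} [Field K] [CharZero K] (n : ℕ)
    (ℓ : Fin n → MvPolynomial (Fin 3) K)
    (hl : ∀ i, (ℓ i).IsHomogeneous 1) (hnz : ∀ i, ℓ i ≠ 0)
    (hprop : ∀ i j, i ≠ j → ∀ c : K, ℓ i ≠ c • ℓ j)
    (F : MvPolynomial (Fin 3) K) (d : ℕ) (hF : F.IsHomogeneous d)
    (r j : ℕ) (hj : 1 ≤ j) (hr : j + 1 ≤ r) (hdeg : r - j ≤ d)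
    (A : MvPolynomial (Fin 3) K) (hA : A = ∏ i, ℓ i)
    (hyp : ∀ L : List (Fin 3), L.length = r - j →
      A ^ j ∣ L.foldr (fun v p => MvPolynomial.pderiv v p) F) :
    ∀ L : List (Fin 3), L.length = r - j - 1 →
      A ^ (j + 1) ∣ L.foldr (fun v p => MvPolynomial.pderiv v p) F := by
  classical
  intro L hL
  set D := L.foldr (fun v p => MvPolynomial.pderiv v p) F with hD
  have hA0 : A ≠ 0 := by
    rw [hA]; exact Finset.prod_ne_zero_iff.mpr (fun i _ => hnz i)
  have hDder : ∀ v : Fin 3, A ^ j ∣ pderiv v D := by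
    intro v
    have := hyp (v :: L) (by simp [hL]; omega)
    simpa [hD] using this
  -- Step 1 : A ^ j ∣ D via Euler's relation
  have hDhom : D.IsHomogeneous (d - L.length) := Stmt6Aux.foldr_isHomogeneous hF L
  have hE := Stmt6Aux.euler hDhom
  have hm : (d - L.length) ≠ 0 := by omega
  have hsum : A ^ j ∣ ∑ i : Fin 3, X i * pderiv i D :=
    Finset.dvd_sum fun i _ => (hDder i).mul_left _
  rw [hE] at hsum
  have hu : IsUnit ((d - L.length : ℕ) : MvPolynomial (Fin 3) K) := by
    have : ((d - L.length : ℕ) : MvPolynomial (Fin 3) K) = C ((d - L.length : ℕ) : K) := by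
      simp
    rw [this]
    exact (isUnit_iff_ne_zero.mpr (Nat.cast_ne_zero.mpr hm)).map (C : K →+* _)
  obtain ⟨G, hG⟩ : A ^ j ∣ D := (hu.dvd_mul_left).mp hsum
  -- Step 2 : A ∣ pderiv v A * G for every v
  have hjunit : IsUnit ((j : ℕ) : MvPolynomial (Fin 3) K) := by
    have : ((j : ℕ) : MvPolynomial (Fin 3) K) = C ((j : ℕ) : K) := by simp
    rw [this]
    exact (isUnit_iff_ne_zero.mpr (Nat.cast_ne_zero.mpr (by omega))).map (C : K →+* _)
  have hkey : ∀ v : Fin 3, A ∣ pderiv v A * G := by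
    intro v
    have h1 : pderiv v D = ((j : MvPolynomial (Fin 3) K) * A ^ (j - 1) * pderiv v A) * G
        + A ^ j * pderiv v G := by
      rw [hG, pderiv_mul, pderiv_pow]
    have h2 : A ^ j ∣ ((j : MvPolynomial (Fin 3) K) * A ^ (j - 1) * pderiv v A) * G := by
      have h2' := dvd_sub (hDder v) (dvd_mul_right (A ^ j) (pderiv v G))
      rw [h1] at h2'
      simpa using h2'
    have h3 : A ^ (j - 1) * A ∣ A ^ (j - 1) *
        ((j : MvPolynomial (Fin 3) K) * (pderiv v A * G)) := by
      have hpow : A ^ (j - 1) * A = A ^ j := by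
        rw [← pow_succ]; congr 1; omega
      calc A ^ (j - 1) * A = A ^ j := hpow
        _ ∣ ((j : MvPolynomial (Fin 3) K) * A ^ (j - 1) * pderiv v A) * G := h2
        _ = A ^ (j - 1) * ((j : MvPolynomial (Fin 3) K) * (pderiv v A * G)) := by ring
    have h4 := (mul_dvd_mul_iff_left (pow_ne_zero (j - 1) hA0)).mp h3
    exact (hjunit.dvd_mul_left).mp h4
  -- Step 3 : each ℓ i divides G
  have hldvdG : ∀ i, ℓ i ∣ G := by
    intro i
    obtain ⟨v, hv⟩ := Stmt6Aux.exists_coeff_ne_zero (hl i) (hnz i)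
    have hprime := Stmt6Aux.prime_linear (hl i) (hnz i)
    have hliA : ℓ i ∣ A := hA ▸ Finset.dvd_prod_of_mem ℓ (Finset.mem_univ i)
    rcases hprime.2.2 _ _ (hliA.trans (hkey v)) with hdA | hdG
    · exfalso
      set B := ∏ m ∈ Finset.univ.erase i, ℓ m with hB
      have hAeq : A = ℓ i * B := by
        rw [hA, hB, Finset.mul_prod_erase _ _ (Finset.mem_univ i)]
      have hpd : pderiv v A = C (coeff (Finsupp.single v 1) (ℓ i)) * B
          + ℓ i * pderiv v B := by
        rw [hAeq, pderiv_mul, Stmt6Aux.pderiv_linear (hl i) v]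
      have h5 : ℓ i ∣ C (coeff (Finsupp.single v 1) (ℓ i)) * B := by
        have := dvd_sub hdA (dvd_mul_right (ℓ i) (pderiv v B))
        rw [hpd] at this
        simpa using this
      have hcu : IsUnit (C (coeff (Finsupp.single v 1) (ℓ i)) : MvPolynomial (Fin 3) K) :=
        (isUnit_iff_ne_zero.mpr hv).map (C : K →+* _)
      have h6 : ℓ i ∣ B := (hcu.dvd_mul_left).mp h5
      obtain ⟨m, hmmem, hdvd⟩ := (hprime.dvd_finset_prod_iff _).mp h6
      obtain ⟨a, ha⟩ := Stmt6Aux.smul_of_dvd_linear (hl i) (hl m) hdvd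
      exact hprop m i (Finset.ne_of_mem_erase hmmem) a ha
    · exact hdG
  -- Step 4 : A ∣ G and conclusion
  have hAG : A ∣ G := by
    rw [hA]
    refine Stmt6Aux.prod_primes_dvd' _ _ _
      (fun i _ => Stmt6Aux.prime_linear (hl i) (hnz i)) ?_ (fun i _ => hldvdG i)
    intro i _ m _ him hdvd
    obtain ⟨a, ha⟩ := Stmt6Aux.smul_of_dvd_linear (hl i) (hl m) hdvd
    exact hprop m i (Ne.symm him) a ha
  calc A ^ (j + 1) = A ^ j * A := by rw [pow_succ]
    _ ∣ A ^ j * G := mul_dvd_mul_left _ hAG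
    _ = D := hG.symm
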